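/- For every ε > 0 and all real numbers lo, hi, y with lo ≤ hi, the smooth saturation function S^ε(y) = lo + ε·ln(1 + exp((hi − lo)/ε)/(1 + exp((hi − y)/ε))) approximates the clamp of y to [lo, hi] with error at most 2ε·ln 2: |S^ε(y) − min{max{y, lo}, hi}| ≤ 2ε·ln 2. -/

import Mathlib

/-- For every ε > 0 and all real `lo ≤ hi` and y, the smooth saturation
function `S^ε(y) = lo + ε·ln(1 + exp((hi − lo)/ε)/(1 + exp((hi − y)/ε)))`
approximates the clamp of y to `[lo, hi]` with error at most `2ε·ln 2`. -/
theorem smooth_clamp_error_bound (ε : ℝ) (hε : 0 < ε) (lo hi y : ℝ) (h : lo ≤ hi) :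
    |lo + ε * Real.log (1 + Real.exp ((hi - lo) / ε) / (1 + Real.exp ((hi - y) / ε)))
        - min (max y lo) hi| ≤ 2 * ε * Real.log 2 := by
  have hεne : ε ≠ 0 := ne_of_gt hε
  set a := (hi - lo)/ε with ha
  set b := (hi - y)/ε with hb
  have hea : 0 < Real.exp a := Real.exp_pos a
  have heb : 0 < Real.exp b := Real.exp_pos b
  have hden : (0:ℝ) < 1 + Real.exp b := by positivity
  have key : 1 + Real.exp a / (1 + Real.exp b)
      = (1 + Real.exp b + Real.exp a) / (1 + Real.exp b) := by
    field_simp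
  set m := max (max a b) 0 with hm
  have hma : a ≤ m := le_max_of_le_left (le_max_left _ _)
  have hmb : b ≤ m := le_max_of_le_left (le_max_right _ _)
  have hm0 : 0 ≤ m := le_max_right _ _
  have hN : (0:ℝ) < 1 + Real.exp b + Real.exp a := by positivity
  have hN2 : Real.log (1 + Real.exp b + Real.exp a) ≤ m + Real.log 3 := by
    have h1 : 1 + Real.exp b + Real.exp a ≤ 3 * Real.exp m := by
      have := Real.one_le_exp hm0
      have := Real.exp_le_exp.mpr hma
      have := Real.exp_le_exp.mpr hmb
      linarith
    calc Real.log (1 + Real.exp b + Real.exp a) ≤ Real.log (3 * Real.exp m) :=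
          Real.log_le_log hN h1
      _ = m + Real.log 3 := by
          rw [Real.log_mul (by norm_num) (Real.exp_ne_zero m), Real.log_exp]; ring
  have hN1 : m ≤ Real.log (1 + Real.exp b + Real.exp a) := by
    have h1 : Real.exp m ≤ 1 + Real.exp b + Real.exp a := by
      rcases max_cases (max a b) 0 with ⟨h1, _⟩ | ⟨h1, _⟩
      · rw [hm, h1]
        rcases max_cases a b with ⟨h2, _⟩ | ⟨h2, _⟩ <;> rw [h2] <;> linarith
      · rw [hm, h1, Real.exp_zero]; linarith
    calc m = Real.log (Real.exp m) := (Real.log_exp m).symm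
      _ ≤ _ := Real.log_le_log (Real.exp_pos m) h1
  set n := max b 0 with hn
  have hD2 : Real.log (1 + Real.exp b) ≤ n + Real.log 2 := by
    have h1 : 1 + Real.exp b ≤ 2 * Real.exp n := by
      have := Real.one_le_exp (le_max_right b 0)
      have := Real.exp_le_exp.mpr (le_max_left b 0)
      linarith
    calc Real.log (1 + Real.exp b) ≤ Real.log (2 * Real.exp n) := Real.log_le_log hden h1
      _ = n + Real.log 2 := by
          rw [Real.log_mul (by norm_num) (Real.exp_ne_zero n), Real.log_exp]; ring
  have hD1 : n ≤ Real.log (1 + Real.exp b) := by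
    have h1 : Real.exp n ≤ 1 + Real.exp b := by
      rcases max_cases b 0 with ⟨h1, _⟩ | ⟨h1, _⟩ <;> rw [hn, h1]
      · linarith
      · rw [Real.exp_zero]; linarith
    calc n = Real.log (Real.exp n) := (Real.log_exp n).symm
      _ ≤ _ := Real.log_le_log (Real.exp_pos n) h1
  have hεa : ε * a = hi - lo := by rw [ha]; field_simp
  have hεb : ε * b = hi - y := by rw [hb]; field_simp
  have hclamp : min (max y lo) hi = lo + ε * (m - n) := by
    have hεm : ε * m = max (max (hi - lo) (hi - y)) 0 := by
      rw [hm, mul_max_of_nonneg _ _ hε.le, mul_max_of_nonneg _ _ hε.le, hεa, hεb, mul_zero]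
    have hεn : ε * n = max (hi - y) 0 := by
      rw [hn, mul_max_of_nonneg _ _ hε.le, hεb, mul_zero]
    have : ε * (m - n) = max (max (hi - lo) (hi - y)) 0 - max (hi - y) 0 := by
      rw [mul_sub, hεm, hεn]
    rw [this]
    rcases le_total y lo with hyl | hyl
    · rw [max_eq_right hyl, min_eq_left h]
      rw [max_eq_right (by linarith : hi - lo ≤ hi - y), max_eq_left (by linarith : (0:ℝ) ≤ hi - y)]
      ring
    · rw [max_eq_left hyl]
      rcases le_total y hi with hyh | hyh
      · rw [min_eq_left hyh,
          max_eq_left (by linarith : hi - y ≤ hi - lo), max_eq_left (by linarith : (0:ℝ) ≤ hi - lo),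
          max_eq_left (by linarith : (0:ℝ) ≤ hi - y)]
        ring
      · rw [min_eq_right hyh,
          max_eq_left (by linarith : hi - y ≤ hi - lo), max_eq_left (by linarith : (0:ℝ) ≤ hi - lo),
          max_eq_right (by linarith : hi - y ≤ 0)]
        ring
  have hlog34 : Real.log 3 ≤ 2 * Real.log 2 := by
    have h4 : (2:ℝ) * Real.log 2 = Real.log 4 := by
      rw [show (4:ℝ) = 2^2 by norm_num, Real.log_pow]; push_cast; ring
    rw [h4]
    exact Real.log_le_log (by norm_num) (by norm_num)
  have hlog2 : 0 ≤ Real.log 2 := Real.log_nonneg (by norm_num)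
  rw [key, Real.log_div (ne_of_gt hN) (ne_of_gt hden), hclamp]
  have expand : lo + ε * (Real.log (1 + Real.exp b + Real.exp a) - Real.log (1 + Real.exp b))
      - (lo + ε * (m - n))
      = ε * (Real.log (1 + Real.exp b + Real.exp a) - Real.log (1 + Real.exp b) - (m - n)) := by
    ring
  rw [expand, abs_le]
  constructor <;> nlinarith [mul_le_mul_of_nonneg_left hlog34 hε.le,
    mul_le_mul_of_nonneg_left hlog2 hε.le,
    mul_le_mul_of_nonneg_left hN2 hε.le, mul_le_mul_of_nonneg_left hN1 hε.le,
    mul_le_mul_of_nonneg_left hD2 hε.le, mul_le_mul_of_nonneg_left hD1 hε.le]
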